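/- Let T ∈ ℝ, C ≥ 0, Q ≥ 0. Let y : [T, ∞) → ℝ be differentiable and h : [T, ∞) → ℝ be continuous with h(s) ≥ 0, y′(s) + h(s) ≤ C, and 0 ≤ y(s) ≤ Q for all s ≥ T. Then for all t ≥ T, ∫_T^t e^{−(t−s)}·h(s) ds ≤ 2Q + C. -/

import Mathlib

/-- Exponentially weighted integration-by-parts inequality: if h ≥ 0 is
continuous, y is differentiable with y′ + h ≤ C and 0 ≤ y ≤ Q on [T, ∞),
then ∫_T^t e^{−(t−s)} h(s) ds ≤ 2Q + C for all t ≥ T. -/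
theorem exp_weighted_dissipation_bound (T C Q : ℝ) (hC : 0 ≤ C) (hQ : 0 ≤ Q)
    (y h : ℝ → ℝ)
    (hy : ∀ s ≥ T, DifferentiableAt ℝ y s)
    (hh : ContinuousOn h (Set.Ici T))
    (hpos : ∀ s ≥ T, 0 ≤ h s)
    (hineq : ∀ s ≥ T, deriv y s + h s ≤ C)
    (hbd : ∀ s ≥ T, 0 ≤ y s ∧ y s ≤ Q) :
    ∀ t ≥ T, ∫ s in T..t, Real.exp (-(t - s)) * h s ≤ 2 * Q + C := by
  intro t ht
  -- rewrite the integrand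
  have hrw : (fun s => Real.exp (-(t - s)) * h s) = fun s => Real.exp (s - t) * h s := by
    funext s; ring_nf
  rw [hrw]
  set φ : ℝ → ℝ := fun s => Real.exp (s - t) * h s with hφ
  have hφcont : ContinuousOn φ (Set.Ici T) :=
    (Real.continuous_exp.comp (continuous_id.sub continuous_const)).continuousOn.mul hh
  have hsub : Set.Icc T t ⊆ Set.Ici T := Set.Icc_subset_Ici_self
  have hφint : IntervalIntegrable φ MeasureTheory.volume T t :=
    (hφcont.mono (by rw [Set.uIcc_of_le ht]; exact hsub)).intervalIntegrable
  -- auxiliary function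
  set G : ℝ → ℝ := fun s => (∫ σ in T..s, φ σ) + Real.exp (s - t) * y s
      - (C + Q) * Real.exp (s - t) with hG
  have hEy : ∀ s ≥ T, HasDerivAt (fun u => Real.exp (u - t) * y u)
      (Real.exp (s - t) * y s + Real.exp (s - t) * deriv y s) s := by
    intro s hs
    have h1 : HasDerivAt (fun u => Real.exp (u - t)) (Real.exp (s - t)) s := by
      simpa using ((hasDerivAt_id s).sub_const t).exp
    exact h1.mul (hy s hs).hasDerivAt
  have hE : ∀ s : ℝ, HasDerivAt (fun u => (C + Q) * Real.exp (u - t)) ((C + Q) * Real.exp (s - t)) s := by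
    intro s
    have h1 : HasDerivAt (fun u => Real.exp (u - t)) (Real.exp (s - t)) s := by
      simpa using ((hasDerivAt_id s).sub_const t).exp
    simpa [mul_comm] using h1.const_mul (C + Q)
  have hGderiv : ∀ x ∈ Set.Ioo T t, HasDerivAt G
      (φ x + (Real.exp (x - t) * y x + Real.exp (x - t) * deriv y x)
        - (C + Q) * Real.exp (x - t)) x := by
    intro x hx
    have hxT : T ≤ x := le_of_lt hx.1
    have hφx : ContinuousAt φ x :=
      hφcont.continuousAt (Ici_mem_nhds hx.1)
    have hφintx : IntervalIntegrable φ MeasureTheory.volume T x :=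
      (hφcont.mono (by rw [Set.uIcc_of_le hxT]; exact Set.Icc_subset_Ici_self)).intervalIntegrable
    have h1 : HasDerivAt (fun u => ∫ σ in T..u, φ σ) (φ x) x :=
      intervalIntegral.integral_hasDerivAt_right hφintx
        ((hφcont.mono Set.Ioi_subset_Ici_self).stronglyMeasurableAtFilter isOpen_Ioi x hx.1) hφx
    exact (h1.add (hEy x hxT)).sub (hE x)
  -- G is antitone on [T, t]
  have hanti : AntitoneOn G (Set.Icc T t) := by
    apply antitoneOn_of_deriv_nonpos (convex_Icc T t)
    · -- continuity
      apply ContinuousOn.sub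
      apply ContinuousOn.add
      · have := intervalIntegral.continuousOn_primitive_interval
          (f := φ) (μ := MeasureTheory.volume) (a := T) (b := t)
          ((hφcont.mono (by rw [Set.uIcc_of_le ht]; exact hsub)).integrableOn_compact
            (by rw [Set.uIcc_of_le ht]; exact isCompact_Icc))
        rwa [Set.uIcc_of_le ht] at this
      · intro s hs
        exact ((Real.continuous_exp.comp (continuous_id.sub continuous_const)).continuousAt.mul
          (hy s hs.1).continuousAt).continuousWithinAt
      · exact (continuous_const.mul
          (Real.continuous_exp.comp (continuous_id.sub continuous_const))).continuousOn
    · intro x hx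
      rw [interior_Icc] at hx
      exact (hGderiv x hx).differentiableAt.differentiableWithinAt
    · intro x hx
      rw [interior_Icc] at hx
      rw [(hGderiv x hx).deriv]
      have hxT : T ≤ x := le_of_lt hx.1
      have key : h x + y x + deriv y x - (C + Q) ≤ 0 := by
        have := hineq x hxT
        have := (hbd x hxT).2
        linarith
      have hexp : (0:ℝ) ≤ Real.exp (x - t) := (Real.exp_pos _).le
      have : φ x + (Real.exp (x - t) * y x + Real.exp (x - t) * deriv y x)
          - (C + Q) * Real.exp (x - t)
          = Real.exp (x - t) * (h x + y x + deriv y x - (C + Q)) := by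
        simp only [hφ]; ring
      rw [this]
      exact mul_nonpos_of_nonneg_of_nonpos hexp key
  have hGle : G t ≤ G T :=
    hanti (Set.left_mem_Icc.2 ht) (Set.right_mem_Icc.2 ht) ht
  have hGT : G T ≤ 0 := by
    have h1 : (∫ σ in T..T, φ σ) = 0 := intervalIntegral.integral_same
    have h2 : y T ≤ Q := (hbd T le_rfl).2
    have hexp : (0:ℝ) ≤ Real.exp (T - t) := (Real.exp_pos _).le
    have : G T = Real.exp (T - t) * (y T - (C + Q)) := by
      simp only [hG, h1]; ring
    rw [this]
    exact mul_nonpos_of_nonneg_of_nonpos hexp (by linarith)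
  have hyt : 0 ≤ y t := (hbd t ht).1
  have hexp : (0:ℝ) < Real.exp (t - t) := Real.exp_pos _
  have hGt : G t = (∫ σ in T..t, φ σ) + y t - (C + Q) := by
    simp [hG]
  have : (∫ σ in T..t, φ σ) ≤ C + Q := by
    have := hGle.trans hGT
    rw [hGt] at this
    linarith
  linarith
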